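/- Let G be a connected graph with at least one edge, adjacency matrix A, and Laplacian L. If χ(G) = 1 + μ(A)/(μ(L) − μ(A)), then G is regular. -/

import Mathlib

/-- Sum of conjugated powers of a primitive `r`-th root of unity:
`∑ k < r, conj(ζ^(k c₁)) ζ^(k c₂) = r` if `c₁ = c₂` and `0` otherwise. -/
lemma zeta_sum' (r : ℕ) (hr : 0 < r) (c1 c2 : Fin r) :
    ∑ k ∈ Finset.range r,
      (starRingEnd ℂ) (Complex.exp (2 * Real.pi * Complex.I / r) ^ (k * (c1 : ℕ))) *
        Complex.exp (2 * Real.pi * Complex.I / r) ^ (k * (c2 : ℕ)) =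
      if c1 = c2 then (r : ℂ) else 0 := by
  have hprim : IsPrimitiveRoot (Complex.exp (2 * Real.pi * Complex.I / r)) r :=
    Complex.isPrimitiveRoot_exp r hr.ne'
  set ζ : ℂ := Complex.exp (2 * Real.pi * Complex.I / r) with hζ
  have hζ0 : ζ ≠ 0 := Complex.exp_ne_zero _
  have hconj : (starRingEnd ℂ) ζ = ζ⁻¹ := by
    rw [hζ, ← Complex.exp_conj, ← Complex.exp_neg]
    congr 1
    simp only [map_div₀, map_mul, Complex.conj_I, map_ofNat, Complex.conj_natCast,
      Complex.conj_ofReal]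
    ring
  set d : ℤ := (c2 : ℤ) - (c1 : ℤ) with hd
  have hterm : ∀ k ∈ Finset.range r,
      (starRingEnd ℂ) (ζ ^ (k * (c1 : ℕ))) * ζ ^ (k * (c2 : ℕ)) = (ζ ^ d) ^ k := by
    intro k _
    rw [map_pow, hconj]
    rw [← zpow_natCast ζ⁻¹ (k * c1), ← zpow_natCast ζ (k * c2), inv_zpow, ← zpow_neg,
      ← zpow_add₀ hζ0, ← zpow_natCast (ζ ^ d) k, ← zpow_mul]
    congr 1
    push_cast [hd]; ring
  rw [Finset.sum_congr rfl hterm]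
  by_cases h : c1 = c2
  · have : d = 0 := by simp [hd, h]
    simp [this, h]
  · have hd0 : ζ ^ d ≠ 1 := by
      intro h1
      rw [hprim.zpow_eq_one_iff_dvd] at h1
      have habs : d = 0 := by
        refine Int.eq_zero_of_abs_lt_dvd h1 ?_
        have h1 := c1.isLt; have h2 := c2.isLt
        rw [abs_lt]; omega
      apply h
      have : (c1 : ℤ) = (c2 : ℤ) := by omega
      exact Fin.ext (by exact_mod_cast this)
    rw [geom_sum_eq hd0]
    have hnum : (ζ ^ d) ^ (r : ℕ) = 1 := by
      rw [← zpow_natCast (ζ ^ d) r, ← zpow_mul, mul_comm, zpow_mul, zpow_natCast,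
        hprim.pow_eq_one, one_zpow]
    rw [hnum]
    simp [h]

open Matrix SimpleGraph

noncomputable def maxEigR {n : ℕ} (A : Matrix (Fin n) (Fin n) ℝ) : ℝ :=
  sSup (spectrum ℝ A)

lemma maxEig_mem {n : ℕ} [Nonempty (Fin n)] {M : Matrix (Fin n) (Fin n) ℝ}
    (hM : M.IsHermitian) : maxEigR M ∈ spectrum ℝ M := by
  have hne : (spectrum ℝ M).Nonempty :=
    ⟨_, hM.eigenvalues_mem_spectrum_real (Classical.arbitrary _)⟩
  exact hne.csSup_mem (M.finite_spectrum)

lemma exists_maxEig_vec {n : ℕ} [Nonempty (Fin n)] {M : Matrix (Fin n) (Fin n) ℝ}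
    (hM : M.IsHermitian) : ∃ v : Fin n → ℝ, v ≠ 0 ∧ M *ᵥ v = maxEigR M • v := by
  have hmem : maxEigR M ∈ spectrum ℝ (toEuclideanLin M) := by
    rw [Matrix.spectrum_toEuclideanLin]
    exact maxEig_mem hM
  have hev := Module.End.hasEigenvalue_iff_mem_spectrum.mpr hmem
  obtain ⟨v, hv⟩ := hev.exists_hasEigenvector
  refine ⟨(WithLp.equiv 2 _) v, ?_, ?_⟩
  · simpa using hv.right
  · have h1 : toEuclideanLin M v = maxEigR M • v := hv.apply_eq_smul
    have := congrArg (WithLp.equiv 2 (Fin n → ℝ)) h1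
    simpa using this

lemma rayleigh_le {n : ℕ} {M : Matrix (Fin n) (Fin n) ℝ}
    (hM : M.IsHermitian) (z : Fin n → ℝ) :
    z ⬝ᵥ (M *ᵥ z) ≤ maxEigR M * (z ⬝ᵥ z) := by
  classical
  set b := hM.eigenvectorBasis with hb
  set z' : EuclideanSpace ℝ (Fin n) := (WithLp.equiv 2 _).symm z with hz'
  have hTb : ∀ i, toEuclideanLin M (b i) = hM.eigenvalues i • b i := by
    intro i
    apply (WithLp.equiv 2 (Fin n → ℝ)).injective
    simp only [WithLp.equiv_apply, Matrix.ofLp_toEuclideanLin_apply]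
    have := hM.mulVec_eigenvectorBasis i
    simpa using this
  have hsym : (toEuclideanLin M).IsSymmetric := Matrix.isHermitian_iff_isSymmetric.1 hM
  have key : ∀ (w : EuclideanSpace ℝ (Fin n)),
      (inner ℝ w (toEuclideanLin M w) : ℝ) = ∑ i, hM.eigenvalues i * (inner ℝ w (b i) : ℝ)^2 := by
    intro w
    rw [← b.sum_inner_mul_inner w (toEuclideanLin M w)]
    congr 1; ext i
    have : (inner ℝ (b i) (toEuclideanLin M w) : ℝ) = inner ℝ (toEuclideanLin M (b i)) w := by
      rw [hsym (b i) w]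
    rw [this, hTb i, inner_smul_left]
    simp only [RCLike.star_def, starRingEnd_apply, star_trivial]
    rw [real_inner_comm (b i) w]
    ring
  have key2 : (z ⬝ᵥ (M *ᵥ z)) = ∑ i, hM.eigenvalues i * (inner ℝ z' (b i) : ℝ)^2 := by
    rw [← key z']
    rw [EuclideanSpace.inner_eq_star_dotProduct]
    simp [z', Matrix.toEuclideanLin_apply]
    exact dotProduct_comm _ _
  have key3 : (z ⬝ᵥ z) = ∑ i, (inner ℝ z' (b i) : ℝ)^2 := by
    have := b.sum_inner_mul_inner z' z'
    have h2 : (inner ℝ z' z' : ℝ) = z ⬝ᵥ z := by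
      rw [EuclideanSpace.inner_eq_star_dotProduct]; simp [z']
    rw [← h2, ← this]
    congr 1; ext i
    rw [real_inner_comm (b i) z']; ring
  rw [key2, key3, Finset.mul_sum]
  apply Finset.sum_le_sum
  intro i _
  have h1 : hM.eigenvalues i ≤ maxEigR M :=
    le_csSup (M.finite_spectrum.bddAbove) (hM.eigenvalues_mem_spectrum_real i)
  nlinarith [sq_nonneg (inner ℝ z' (b i) : ℝ)]

/-- complex quadratic form of a real matrix -/
noncomputable def QC {n : ℕ} (M : Matrix (Fin n) (Fin n) ℝ) (y : Fin n → ℂ) : ℂ :=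
  ∑ u, ∑ v, (starRingEnd ℂ) (y u) * ((M u v : ℝ) : ℂ) * y v

lemma QC_re {n : ℕ} (M : Matrix (Fin n) (Fin n) ℝ) (y : Fin n → ℂ) :
    (QC M y).re = (fun v => (y v).re) ⬝ᵥ (M *ᵥ fun v => (y v).re)
      + (fun v => (y v).im) ⬝ᵥ (M *ᵥ fun v => (y v).im) := by
  have h1 : ∀ u v : Fin n, ((starRingEnd ℂ) (y u) * ((M u v : ℝ) : ℂ) * y v).re
      = M u v * ((y u).re * (y v).re) + M u v * ((y u).im * (y v).im) := by
    intro u v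
    simp [Complex.mul_re, Complex.mul_im, Complex.ofReal_re, Complex.ofReal_im]
    ring
  simp only [QC, Complex.re_sum, h1]
  simp only [dotProduct, mulVec, Finset.mul_sum, ← Finset.sum_add_distrib]
  congr 1; ext u; congr 1; ext v; ring

lemma QC_re_le {n : ℕ} {M : Matrix (Fin n) (Fin n) ℝ} (hM : M.IsHermitian)
    (y : Fin n → ℂ) : (QC M y).re ≤ maxEigR M * ∑ v, Complex.normSq (y v) := by
  rw [QC_re]
  have h1 := rayleigh_le hM (fun v => (y v).re)
  have h2 := rayleigh_le hM (fun v => (y v).im)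
  have h3 : ∑ v, Complex.normSq (y v)
      = ((fun v => (y v).re) ⬝ᵥ fun v => (y v).re)
        + ((fun v => (y v).im) ⬝ᵥ fun v => (y v).im) := by
    simp only [dotProduct, ← Finset.sum_add_distrib, Complex.normSq_apply]
  rw [h3]; linarith

lemma QC_ofReal {n : ℕ} (M : Matrix (Fin n) (Fin n) ℝ) (x : Fin n → ℝ) :
    QC M (fun v => (x v : ℂ)) = ((x ⬝ᵥ (M *ᵥ x) : ℝ) : ℂ) := by
  simp only [QC, Complex.conj_ofReal, dotProduct, mulVec, Finset.mul_sum]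
  push_cast
  congr 1; ext u; congr 1; ext v; ring

lemma sum_QC {n r : ℕ} (G : SimpleGraph (Fin n)) [DecidableRel G.Adj]
    (C : G.Coloring (Fin r)) (hr : 0 < r) (x : Fin n → ℝ) :
    ∑ k ∈ Finset.range r,
      QC (G.lapMatrix ℝ)
        (fun v => Complex.exp (2 * Real.pi * Complex.I / r) ^ (k * (C v : ℕ)) * (x v : ℂ))
      = (r : ℂ) * ((x ⬝ᵥ (G.degMatrix ℝ *ᵥ x) : ℝ) : ℂ) := by
  set ζ : ℂ := Complex.exp (2 * Real.pi * Complex.I / r) with hζ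
  have swap : ∑ k ∈ Finset.range r,
      QC (G.lapMatrix ℝ) (fun v => ζ ^ (k * (C v : ℕ)) * (x v : ℂ))
      = ∑ u, ∑ v, (if C u = C v then (r : ℂ) else 0)
          * (((x u : ℂ)) * ((G.lapMatrix ℝ u v : ℝ) : ℂ) * (x v : ℂ)) := by
    simp only [QC]
    rw [Finset.sum_comm]
    congr 1; ext u
    rw [Finset.sum_comm]
    congr 1; ext v
    rw [← zeta_sum' r hr (C u) (C v), Finset.sum_mul]
    congr 1; ext k
    simp only [RingHom.map_mul, Complex.conj_ofReal]
    ring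
  rw [swap]
  have hterm : ∀ u v : Fin n, (if C u = C v then (r : ℂ) else 0)
      * (((x u : ℂ)) * ((G.lapMatrix ℝ u v : ℝ) : ℂ) * (x v : ℂ))
      = if v = u then (r : ℂ) * ((G.degree u : ℝ) * x u * x u : ℝ) else 0 := by
    intro u v
    by_cases huv : v = u
    · subst huv
      simp only [if_pos rfl, if_pos rfl]
      have : G.lapMatrix ℝ v v = (G.degree v : ℝ) := by
        simp [lapMatrix, degMatrix, Matrix.diagonal_apply_eq]
      rw [this]
      push_cast; ring
    · rw [if_neg huv]
      by_cases hadj : G.Adj u v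
      · rw [if_neg (C.valid hadj)]; ring
      · have : G.lapMatrix ℝ u v = 0 := by
          simp [lapMatrix, degMatrix, Matrix.diagonal_apply_ne _ (fun h => huv h.symm), hadj]
        rw [this]
        push_cast; ring
  simp only [hterm]
  simp only [Finset.sum_ite_eq', Finset.mem_univ, if_pos]
  rw [dotProduct_mulVec_degMatrix]
  push_cast
  rw [Finset.mul_sum]

/-- If equality holds in the bound `χ(G) ≥ 1 + μ(A)/(μ(L) − μ(A))` for a
connected graph with an edge, then `G` is regular. -/
theorem stmt12 {n r : ℕ} (G : SimpleGraph (Fin n)) [DecidableRel G.Adj]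
    (hconn : G.Connected) (hedge : ∃ u v, G.Adj u v)
    (hχ : G.chromaticNumber = (r : ℕ∞))
    (heq : (r : ℝ) = 1 + maxEigR (G.adjMatrix ℝ) /
      (maxEigR (G.lapMatrix ℝ) - maxEigR (G.adjMatrix ℝ))) :
    ∃ d : ℕ, G.IsRegularOfDegree d := by
  classical
  obtain ⟨u0, v0, huv0⟩ := hedge
  haveI : Nonempty (Fin n) := ⟨u0⟩
  -- a coloring with r colors
  have hcol : G.Colorable r := chromaticNumber_le_iff_colorable.mp (le_of_eq hχ)
  obtain ⟨C⟩ := hcol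
  -- r ≥ 2
  have hr2 : 2 ≤ r := by
    by_contra h
    push_neg at h
    interval_cases r
    · exact (C u0).elim0
    · exact C.valid huv0 (Subsingleton.elim _ _)
  have hr0 : 0 < r := by omega
  -- hermitian matrices
  have hA : (G.adjMatrix ℝ).IsHermitian := by
    rw [Matrix.IsHermitian, conjTranspose_eq_transpose_of_trivial]
    exact isSymm_adjMatrix G
  have hL : (G.lapMatrix ℝ).IsHermitian := (posSemidef_lapMatrix ℝ G).1
  set a := maxEigR (G.adjMatrix ℝ) with ha
  set l := maxEigR (G.lapMatrix ℝ) with hl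
  -- relation between eigenvalues from heq
  have hrl : ((r : ℝ) - 1) * l = (r : ℝ) * a := by
    by_cases ht : l - a = 0
    · rw [ht, div_zero] at heq
      norm_num at heq
      have : (2 : ℝ) ≤ (r : ℝ) := by exact_mod_cast hr2
      linarith
    · have h1 : (r : ℝ) - 1 = a / (l - a) := by linarith
      have h2 : ((r : ℝ) - 1) * (l - a) = a := by
        rw [h1, div_mul_cancel₀ _ ht]
      nlinarith [h2]
  -- top eigenvector of A
  obtain ⟨x, hx0, hAx⟩ := exists_maxEig_vec hA
  set s := x ⬝ᵥ x with hs
  have hspos : 0 < s := by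
    obtain ⟨w, hw⟩ := Function.ne_iff.mp hx0
    have : 0 < x w * x w := by
      rcases lt_or_gt_of_ne (show x w ≠ 0 by simpa using hw) with h | h <;> nlinarith
    refine Finset.sum_pos' (fun v _ => mul_self_nonneg (x v)) ⟨w, Finset.mem_univ w, this⟩
  have hxAx : x ⬝ᵥ (G.adjMatrix ℝ *ᵥ x) = a * s := by
    rw [hAx, dotProduct_smul, smul_eq_mul]
  -- the key sum
  set ζ : ℂ := Complex.exp (2 * Real.pi * Complex.I / r) with hζ
  have habsζ : Complex.normSq ζ = 1 := by
    rw [Complex.normSq_eq_norm_sq, Complex.norm_exp]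
    have : (2 * (Real.pi : ℂ) * Complex.I / (r : ℂ)).re = 0 := by
      have : 2 * (Real.pi : ℂ) * Complex.I / (r : ℂ)
          = ((2 * Real.pi / r : ℝ) : ℂ) * Complex.I := by
        push_cast; ring
      rw [this]
      simp
    rw [this]
    norm_num
  have hnormy : ∀ k : ℕ, ∑ v, Complex.normSq (ζ ^ (k * (C v : ℕ)) * (x v : ℂ)) = s := by
    intro k
    rw [hs, dotProduct]
    congr 1; ext v
    rw [Complex.normSq_mul, map_pow Complex.normSq, habsζ, one_pow, one_mul, Complex.normSq_ofReal]
  have hsum := sum_QC G C hr0 x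
  -- real part of the sum
  have hre : (r : ℝ) * (x ⬝ᵥ (G.degMatrix ℝ *ᵥ x))
      = ∑ k ∈ Finset.range r, (QC (G.lapMatrix ℝ) (fun v => ζ ^ (k * (C v : ℕ)) * (x v : ℂ))).re := by
    rw [← Complex.re_sum, hsum]
    simp
  -- split off k = 0
  have hsplit : ∑ k ∈ Finset.range r,
      (QC (G.lapMatrix ℝ) (fun v => ζ ^ (k * (C v : ℕ)) * (x v : ℂ))).re
      = (QC (G.lapMatrix ℝ) (fun v => ζ ^ (0 * (C v : ℕ)) * (x v : ℂ))).re
        + ∑ k ∈ Finset.Ico 1 r,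
          (QC (G.lapMatrix ℝ) (fun v => ζ ^ (k * (C v : ℕ)) * (x v : ℂ))).re := by
    rw [Finset.range_eq_Ico, Finset.sum_eq_sum_Ico_succ_bot hr0]
  have hk0 : (QC (G.lapMatrix ℝ) (fun v => ζ ^ (0 * (C v : ℕ)) * (x v : ℂ))).re
      = x ⬝ᵥ (G.lapMatrix ℝ *ᵥ x) := by
    have : (fun v => ζ ^ (0 * (C v : ℕ)) * (x v : ℂ)) = fun v => ((x v : ℝ) : ℂ) := by
      funext v; simp
    rw [this, QC_ofReal]
    simp
  have hbound : ∑ k ∈ Finset.Ico 1 r,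
      (QC (G.lapMatrix ℝ) (fun v => ζ ^ (k * (C v : ℕ)) * (x v : ℂ))).re
      ≤ ((r : ℝ) - 1) * (l * s) := by
    have h1 : ∀ k ∈ Finset.Ico 1 r,
        (QC (G.lapMatrix ℝ) (fun v => ζ ^ (k * (C v : ℕ)) * (x v : ℂ))).re ≤ l * s := by
      intro k _
      have := QC_re_le hL (fun v => ζ ^ (k * (C v : ℕ)) * (x v : ℂ))
      rwa [hnormy k] at this
    calc ∑ k ∈ Finset.Ico 1 r, _ ≤ ∑ k ∈ Finset.Ico 1 r, l * s := Finset.sum_le_sum h1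
    _ = ((r : ℝ) - 1) * (l * s) := by
        rw [Finset.sum_const, Nat.card_Ico, nsmul_eq_mul]
        congr 1
        have : (1 : ℕ) ≤ r := by omega
        push_cast [Nat.cast_sub this]
        ring
  -- Laplacian quadratic forms
  have hlap : x ⬝ᵥ (G.lapMatrix ℝ *ᵥ x) = x ⬝ᵥ (G.degMatrix ℝ *ᵥ x) - a * s := by
    rw [lapMatrix, sub_mulVec, dotProduct_sub, hxAx]
  have hpsd : 0 ≤ x ⬝ᵥ (G.lapMatrix ℝ *ᵥ x) := by
    have := (posSemidef_lapMatrix ℝ G).dotProduct_mulVec_nonneg x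
    simpa using this
  -- combine
  set dd := x ⬝ᵥ (G.degMatrix ℝ *ᵥ x) with hdd
  have hineq : (r : ℝ) * dd ≤ (dd - a * s) + ((r : ℝ) - 1) * (l * s) := by
    rw [hre, hsplit, hk0, hlap]
    linarith [hbound]
  have hdle : dd ≤ a * s := by
    have hrr : (2 : ℝ) ≤ (r : ℝ) := by exact_mod_cast hr2
    nlinarith [hrl, hineq]
  have hzero : x ⬝ᵥ (G.lapMatrix ℝ *ᵥ x) = 0 := le_antisymm (by rw [hlap]; linarith) hpsd
  -- x is constant
  have hconst : ∀ i j : Fin n, x i = x j := by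
    have h0 : Matrix.toLinearMap₂' ℝ (G.lapMatrix ℝ) x x = 0 := by
      rw [Matrix.toLinearMap₂'_apply']; exact hzero
    rw [lapMatrix_toLinearMap₂'_apply'_eq_zero_iff_forall_reachable] at h0
    intro i j
    exact h0 i j ((hconn i j))
  obtain ⟨w, hw⟩ := Function.ne_iff.mp hx0
  have hxw : x w ≠ 0 := by simpa using hw
  -- each degree equals a
  have hdeg : ∀ u : Fin n, (G.degree u : ℝ) = a := by
    intro u
    have h1 : (G.adjMatrix ℝ *ᵥ x) u = a * x u := by
      rw [hAx]; rfl
    rw [adjMatrix_mulVec_apply] at h1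
    have h2 : ∑ v ∈ G.neighborFinset u, x v = (G.degree u : ℝ) * x w := by
      rw [Finset.sum_congr rfl (fun v _ => hconst v w), Finset.sum_const, degree, nsmul_eq_mul]
    rw [h2, hconst u w] at h1
    exact mul_right_cancel₀ hxw h1
  refine ⟨G.degree u0, fun v => ?_⟩
  have : (G.degree v : ℝ) = (G.degree u0 : ℝ) := by rw [hdeg v, hdeg u0]
  exact_mod_cast this
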